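/- Let n ≥ 4 and let m₂₂, m₂₃ ∈ ℂ with m₂₂·m₂₃ ≠ 0. Put M = [[1,0,0],[−m₂₂/m₂₃,m₂₂,m₂₃],[0,0,1]] and let N = (n_{pq}) be a 3×3 complex matrix. If the pair (M,N) satisfies the SMₙ mixed relations on M_{n+1}(ℂ), then n₁₁ = 1, n₁₂ = n₁₃ = n₃₁ = n₃₂ = 0, n₃₃ = 1, n₂₂ = 1 − m₂₃n₂₁ + m₂₃n₂₁/m₂₂, and n₂₃ = −m₂₃²n₂₁/m₂₂. -/

import Mathlib

open Matrix

def loc3 (m i : ℕ) (P : Matrix (Fin 3) (Fin 3) ℂ) : Matrix (Fin m) (Fin m) ℂ :=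
  Matrix.of fun r s =>
    if (r : ℕ) = i - 1 ∧ (s : ℕ) = i - 1 then P 0 0
    else if (r : ℕ) = i - 1 ∧ (s : ℕ) = i then P 0 1
    else if (r : ℕ) = i - 1 ∧ (s : ℕ) = i + 1 then P 0 2
    else if (r : ℕ) = i ∧ (s : ℕ) = i - 1 then P 1 0
    else if (r : ℕ) = i ∧ (s : ℕ) = i then P 1 1
    else if (r : ℕ) = i ∧ (s : ℕ) = i + 1 then P 1 2
    else if (r : ℕ) = i + 1 ∧ (s : ℕ) = i - 1 then P 2 0
    else if (r : ℕ) = i + 1 ∧ (s : ℕ) = i then P 2 1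
    else if (r : ℕ) = i + 1 ∧ (s : ℕ) = i + 1 then P 2 2
    else if r = s then 1 else 0

def Corner5 {m : ℕ} (A : Matrix (Fin m) (Fin m) ℂ) : Prop :=
  ∀ r s : Fin m, 5 ≤ (r : ℕ) ∨ 5 ≤ (s : ℕ) → A r s = if r = s then 1 else 0

lemma corner5_loc3 {m i : ℕ} (hi : i ≤ 3) (P : Matrix (Fin 3) (Fin 3) ℂ) :
    Corner5 (loc3 m i P) := by
  intro r s hrs
  unfold loc3
  simp only [Matrix.of_apply]
  rcases hrs with hr | hs
  · have h1 : ¬((r : ℕ) = i - 1) := by omega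
    have h2 : ¬((r : ℕ) = i) := by omega
    have h3 : ¬((r : ℕ) = i + 1) := by omega
    simp only [h1, h2, h3, false_and, if_false]
  · have h1 : ¬((s : ℕ) = i - 1) := by omega
    have h2 : ¬((s : ℕ) = i) := by omega
    have h3 : ¬((s : ℕ) = i + 1) := by omega
    simp only [h1, h2, h3, and_false, if_false]

lemma corner5_mul {m : ℕ} {A B : Matrix (Fin m) (Fin m) ℂ}
    (hA : Corner5 A) (hB : Corner5 B) : Corner5 (A * B) := by
  intro r s hrs
  rw [Matrix.mul_apply]
  rcases hrs with hr | hs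
  · have : ∀ k : Fin m, A r k * B k s = if r = k then B k s else 0 := fun k => by
      rw [hA r k (Or.inl hr), ite_mul, one_mul, zero_mul]
    simp_rw [this]
    rw [Finset.sum_ite_eq, if_pos (Finset.mem_univ r), hB r s (Or.inl hr)]
  · have : ∀ k : Fin m, A r k * B k s = if k = s then A r k else 0 := fun k => by
      rw [hB k s (Or.inr hs), mul_ite, mul_one, mul_zero]
    simp_rw [this]
    rw [Finset.sum_ite_eq', if_pos (Finset.mem_univ s), hA r s (Or.inr hs)]

lemma mul_apply5 {m : ℕ} (hm : 5 ≤ m) {A B : Matrix (Fin m) (Fin m) ℂ}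
    (hA : Corner5 A) (r s : Fin m) (hr : (r : ℕ) < 5) :
    (A * B) r s = ∑ k : Fin 5, A r (Fin.castLE hm k) * B (Fin.castLE hm k) s := by
  rw [Matrix.mul_apply]
  rw [← Finset.sum_subset (Finset.subset_univ
      ((Finset.univ : Finset (Fin 5)).map (Fin.castLEEmb hm)))]
  · rw [Finset.sum_map]; rfl
  · intro x _ hx
    have hx5 : 5 ≤ (x : ℕ) := by
      by_contra hlt
      exact hx (Finset.mem_map.mpr ⟨⟨(x : ℕ), by omega⟩, Finset.mem_univ _, by
        ext; simp⟩)
    rw [hA r x (Or.inr hx5), if_neg (by intro hrx; rw [hrx] at hr; omega), zero_mul]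

lemma mul_apply5₃ {m : ℕ} (hm : 5 ≤ m) {A B C : Matrix (Fin m) (Fin m) ℂ}
    (hA : Corner5 A) (hB : Corner5 B) (r s : Fin m) (hr : (r : ℕ) < 5) :
    (A * B * C) r s = ∑ l : Fin 5, ∑ k : Fin 5,
      A r (Fin.castLE hm k) * B (Fin.castLE hm k) (Fin.castLE hm l) * C (Fin.castLE hm l) s := by
  rw [mul_apply5 hm (corner5_mul hA hB) r s hr]
  refine Finset.sum_congr rfl fun l _ => ?_
  rw [mul_apply5 hm hA r (Fin.castLE hm l) hr, Finset.sum_mul]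

/-- The pair `(M, N)` of 3×3 complex matrices satisfies the SMₙ mixed relations
on `M_{n+1}(ℂ)`. -/
def SMRel3 (n : ℕ) (M N : Matrix (Fin 3) (Fin 3) ℂ) : Prop :=
  (∀ i j : ℕ, 1 ≤ i → i ≤ n - 1 → 1 ≤ j → j ≤ n - 1 → (i + 2 ≤ j ∨ j + 2 ≤ i) →
      loc3 (n + 1) i N * loc3 (n + 1) j N = loc3 (n + 1) j N * loc3 (n + 1) i N) ∧
  (∀ i j : ℕ, 1 ≤ i → i ≤ n - 1 → 1 ≤ j → j ≤ n - 1 → (i + 2 ≤ j ∨ j + 2 ≤ i) →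
      loc3 (n + 1) i N * loc3 (n + 1) j M = loc3 (n + 1) j M * loc3 (n + 1) i N) ∧
  (∀ i : ℕ, 1 ≤ i → i ≤ n - 1 →
      loc3 (n + 1) i M * loc3 (n + 1) i N = loc3 (n + 1) i N * loc3 (n + 1) i M) ∧
  (∀ i : ℕ, 1 ≤ i → i ≤ n - 2 →
      loc3 (n + 1) i M * loc3 (n + 1) (i + 1) M * loc3 (n + 1) i N
        = loc3 (n + 1) (i + 1) N * loc3 (n + 1) i M * loc3 (n + 1) (i + 1) M) ∧
  (∀ i : ℕ, 1 ≤ i → i ≤ n - 2 →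
      loc3 (n + 1) (i + 1) M * loc3 (n + 1) i M * loc3 (n + 1) (i + 1) N
        = loc3 (n + 1) i N * loc3 (n + 1) (i + 1) M * loc3 (n + 1) i M)

theorem stmt12 (n : ℕ) (hn : 4 ≤ n) (m22 m23 : ℂ) (hm : m22 * m23 ≠ 0)
    (N : Matrix (Fin 3) (Fin 3) ℂ)
    (h : SMRel3 n !![1, 0, 0; -m22 / m23, m22, m23; 0, 0, 1] N) :
    N 0 0 = 1 ∧ N 0 1 = 0 ∧ N 0 2 = 0 ∧ N 2 0 = 0 ∧ N 2 1 = 0 ∧ N 2 2 = 1 ∧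
    N 1 1 = 1 - m23 * N 1 0 + m23 * N 1 0 / m22 ∧
    N 1 2 = -(m23 ^ 2 * N 1 0) / m22 := by
  obtain ⟨h1, h2, h3, h4, h5⟩ := h
  have hm22 : m22 ≠ 0 := fun hh => hm (by simp [hh])
  have hm23 : m23 ≠ 0 := fun hh => hm (by simp [hh])
  have hm5 : 5 ≤ n + 1 := by omega
  have v0 : ((0:Fin 5):ℕ) = 0 := rfl
  have v1 : ((1:Fin 5):ℕ) = 1 := rfl
  have v2 : ((2:Fin 5):ℕ) = 2 := rfl
  have v3 : ((3:Fin 5):ℕ) = 3 := rfl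
  have v4 : ((4:Fin 5):ℕ) = 4 := rfl
  have h13 := h2 1 3 (by omega) (by omega) (by omega) (by omega) (Or.inl (by omega))
  have h31 := h2 3 1 (by omega) (by omega) (by omega) (by omega) (Or.inr (by omega))
  have hc := h3 1 (by omega) (by omega)
  have hb := h4 1 (by omega) (by omega)
  -- N 2 2 = 1
  have e22 := congrFun (congrFun h13 ⟨3, by omega⟩) ⟨2, by omega⟩
  rw [mul_apply5 hm5 (corner5_loc3 (by norm_num) N) _ _ (by norm_num),
      mul_apply5 hm5 (corner5_loc3 (by norm_num) _) _ _ (by norm_num)] at e22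
  rw [Fin.sum_univ_five, Fin.sum_univ_five] at e22
  simp only [loc3, Matrix.of_apply, Fin.ext_iff, Fin.val_castLE, v0, v1, v2, v3, v4] at e22
  norm_num [Matrix.cons_val_two, Matrix.cons_val_one, Matrix.cons_val_zero, Matrix.vecHead, Matrix.vecTail] at e22
  have e20 := congrFun (congrFun h13 ⟨3, by omega⟩) ⟨0, by omega⟩
  rw [mul_apply5 hm5 (corner5_loc3 (by norm_num) N) _ _ (by norm_num),
      mul_apply5 hm5 (corner5_loc3 (by norm_num) _) _ _ (by norm_num)] at e20
  rw [Fin.sum_univ_five, Fin.sum_univ_five] at e20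
  simp only [loc3, Matrix.of_apply, Fin.ext_iff, Fin.val_castLE, v0, v1, v2, v3, v4] at e20
  norm_num [Matrix.cons_val_two, Matrix.cons_val_one, Matrix.cons_val_zero, Matrix.vecHead, Matrix.vecTail] at e20
  have e21 := congrFun (congrFun h13 ⟨3, by omega⟩) ⟨1, by omega⟩
  rw [mul_apply5 hm5 (corner5_loc3 (by norm_num) N) _ _ (by norm_num),
      mul_apply5 hm5 (corner5_loc3 (by norm_num) _) _ _ (by norm_num)] at e21
  rw [Fin.sum_univ_five, Fin.sum_univ_five] at e21
  simp only [loc3, Matrix.of_apply, Fin.ext_iff, Fin.val_castLE, v0, v1, v2, v3, v4] at e21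
  norm_num [Matrix.cons_val_two, Matrix.cons_val_one, Matrix.cons_val_zero, Matrix.vecHead, Matrix.vecTail] at e21
  have e00 := congrFun (congrFun h31 ⟨1, by omega⟩) ⟨2, by omega⟩
  rw [mul_apply5 hm5 (corner5_loc3 (by norm_num) N) _ _ (by norm_num),
      mul_apply5 hm5 (corner5_loc3 (by norm_num) _) _ _ (by norm_num)] at e00
  rw [Fin.sum_univ_five, Fin.sum_univ_five] at e00
  simp only [loc3, Matrix.of_apply, Fin.ext_iff, Fin.val_castLE, v0, v1, v2, v3, v4] at e00
  norm_num [Matrix.cons_val_two, Matrix.cons_val_one, Matrix.cons_val_zero, Matrix.vecHead, Matrix.vecTail] at e00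
  have e01 := congrFun (congrFun h31 ⟨1, by omega⟩) ⟨3, by omega⟩
  rw [mul_apply5 hm5 (corner5_loc3 (by norm_num) N) _ _ (by norm_num),
      mul_apply5 hm5 (corner5_loc3 (by norm_num) _) _ _ (by norm_num)] at e01
  rw [Fin.sum_univ_five, Fin.sum_univ_five] at e01
  simp only [loc3, Matrix.of_apply, Fin.ext_iff, Fin.val_castLE, v0, v1, v2, v3, v4] at e01
  norm_num [Matrix.cons_val_two, Matrix.cons_val_one, Matrix.cons_val_zero, Matrix.vecHead, Matrix.vecTail] at e01
  have e02 := congrFun (congrFun h31 ⟨1, by omega⟩) ⟨4, by omega⟩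
  rw [mul_apply5 hm5 (corner5_loc3 (by norm_num) N) _ _ (by norm_num),
      mul_apply5 hm5 (corner5_loc3 (by norm_num) _) _ _ (by norm_num)] at e02
  rw [Fin.sum_univ_five, Fin.sum_univ_five] at e02
  simp only [loc3, Matrix.of_apply, Fin.ext_iff, Fin.val_castLE, v0, v1, v2, v3, v4] at e02
  norm_num [Matrix.cons_val_two, Matrix.cons_val_one, Matrix.cons_val_zero, Matrix.vecHead, Matrix.vecTail] at e02
  have ec := congrFun (congrFun hc ⟨1, by omega⟩) ⟨0, by omega⟩
  rw [mul_apply5 hm5 (corner5_loc3 (by norm_num) _) _ _ (by norm_num),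
      mul_apply5 hm5 (corner5_loc3 (by norm_num) N) _ _ (by norm_num)] at ec
  rw [Fin.sum_univ_five, Fin.sum_univ_five] at ec
  simp only [loc3, Matrix.of_apply, Fin.ext_iff, Fin.val_castLE, v0, v1, v2, v3, v4] at ec
  norm_num [Matrix.cons_val_two, Matrix.cons_val_one, Matrix.cons_val_zero, Matrix.vecHead, Matrix.vecTail] at ec
  have ed := congrFun (congrFun hb ⟨2, by omega⟩) ⟨3, by omega⟩
  rw [mul_apply5₃ hm5 (corner5_loc3 (by norm_num) _) (corner5_loc3 (by norm_num) _) _ _ (by norm_num),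
      mul_apply5₃ hm5 (corner5_loc3 (by norm_num) N) (corner5_loc3 (by norm_num) _) _ _ (by norm_num)] at ed
  simp only [Fin.sum_univ_five] at ed
  simp only [loc3, Matrix.of_apply, Fin.ext_iff, Fin.val_castLE, v0, v1, v2, v3, v4] at ed
  norm_num [Matrix.cons_val_two, Matrix.cons_val_one, Matrix.cons_val_zero, Matrix.vecHead, Matrix.vecTail] at ed
  have hN00 : N 0 0 = 1 :=
    mul_left_cancel₀ hm23 (show m23 * N 0 0 = m23 * 1 by linear_combination -e00)
  have hN01 : N 0 1 = 0 := e01.resolve_left hm23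
  have hN02 : N 0 2 = 0 := e02.resolve_left hm23
  have hN20 : N 2 0 = 0 := e20.resolve_left (by simp [hm22, hm23])
  have hN21 : N 2 1 = 0 := e21.resolve_left (by simp [hm22, hm23])
  have ha : -m22 / m23 ≠ 0 := div_ne_zero (neg_ne_zero.mpr hm22) hm23
  have hN22 : N 2 2 = 1 :=
    mul_left_cancel₀ ha (show -m22/m23 * N 2 2 = -m22/m23 * 1 by linear_combination -e22)
  rw [hN00, hN20] at ec
  have hN11 : N 1 1 = 1 - m23 * N 1 0 + m23 * N 1 0 / m22 := by
    field_simp at ec ⊢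
    ring_nf at ec ⊢
    linear_combination ec
  have hN12 : N 1 2 = -(m23 ^ 2 * N 1 0) / m22 := by
    rw [hN11] at ed
    field_simp at ed ⊢
    ring_nf at ed ⊢
    linear_combination -ed
  exact ⟨hN00, hN01, hN02, hN20, hN21, hN22, hN11, hN12⟩
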